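/- Fix δ ∈ ℝ and let f₁, f₄, f₅, g be formal power series in one variable ε over ℝ with constant terms a₁, a₄, a₅, c respectively. Define λ₁ = ε³(ε+δ)f₁, λ₅ = ε²(ε+δ)f₅, λ₄ = ε(ε+δ)f₄, and let λ₃ − λ₆ = ε·g. Then each of the four power series w₁ = λ₁, w₂ = λ₅(λ₃−λ₆), w₃ = λ₄²(λ₃−λ₆), w₄ = λ₄(λ₃−λ₆)² has vanishing coefficients of ε⁰, ε¹, ε², and their coefficients of ε³ are respectively δ·a₁, δ·a₅·c, δ²·a₄²·c, δ·a₄·c². In particular, after dividing by δ ≠ 0, the projectivized leading-coefficient vector is [a₁ : a₅c : δ·a₄²c : a₄c²], which tends to [a₁ : a₅c : 0 : a₄c²] as δ → 0. -/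

import Mathlib

open PowerSeries

lemma aux_low (h : PowerSeries ℝ) {n : ℕ} (hn : n ≤ 2) :
    coeff n (X ^ 3 * h) = 0 := by
  rw [coeff_X_pow_mul']
  simp only [if_neg (by omega : ¬ 3 ≤ n)]

lemma aux_three (h : PowerSeries ℝ) :
    coeff 3 (X ^ 3 * h) = constantCoeff h := by
  simpa using coeff_X_pow_mul h 3 0

/-- the order-4 arcs on `I₁ ∩ I₃` as limits of order-3 arcs.
With `λ₁ = ε³(ε+δ)f₁`, `λ₅ = ε²(ε+δ)f₅`, `λ₄ = ε(ε+δ)f₄`, `λ₃ − λ₆ = εg`, where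
`f₁, f₄, f₅, g` have constant terms `a₁, a₄, a₅, c`, the local Bautin generators
`w₁ = λ₁`, `w₂ = λ₅(λ₃−λ₆)`, `w₃ = λ₄²(λ₃−λ₆)`, `w₄ = λ₄(λ₃−λ₆)²` have vanishing
coefficients of `ε⁰, ε¹, ε²`, and their coefficients of `ε³` are `δa₁`, `δa₅c`,
`δ²a₄²c`, `δa₄c²`.  In particular, for `δ ≠ 0` the leading-coefficient vector is
`δ • (a₁, a₅c, δa₄²c, a₄c²)`, i.e. projectively `[a₁ : a₅c : δa₄²c : a₄c²]`, which
tends to `[a₁ : a₅c : 0 : a₄c²]` as `δ → 0`. -/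
theorem stmt_16 (δ : ℝ) (f1 f4 f5 g : PowerSeries ℝ) (a1 a4 a5 c : ℝ)
    (hf1 : constantCoeff f1 = a1) (hf4 : constantCoeff f4 = a4)
    (hf5 : constantCoeff f5 = a5) (hg : constantCoeff g = c)
    (l1 l4 l5 d : PowerSeries ℝ)
    (hl1 : l1 = X ^ 3 * (X + C δ) * f1)
    (hl5 : l5 = X ^ 2 * (X + C δ) * f5)
    (hl4 : l4 = X * (X + C δ) * f4)
    (hd : d = X * g) :
    (∀ n ≤ 2,
      coeff n l1 = 0 ∧
      coeff n (l5 * d) = 0 ∧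
      coeff n (l4 ^ 2 * d) = 0 ∧
      coeff n (l4 * d ^ 2) = 0) ∧
    coeff 3 l1 = δ * a1 ∧
    coeff 3 (l5 * d) = δ * (a5 * c) ∧
    coeff 3 (l4 ^ 2 * d) = δ ^ 2 * (a4 ^ 2 * c) ∧
    coeff 3 (l4 * d ^ 2) = δ * (a4 * c ^ 2) ∧
    (∀ e : ℝ, e ≠ 0 →
      (![e * a1, e * (a5 * c), e ^ 2 * (a4 ^ 2 * c), e * (a4 * c ^ 2)] : Fin 4 → ℝ) =
        e • ![a1, a5 * c, e * (a4 ^ 2 * c), a4 * c ^ 2]) ∧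
    Filter.Tendsto (fun e : ℝ => (![a1, a5 * c, e * (a4 ^ 2 * c), a4 * c ^ 2] : Fin 4 → ℝ))
      (nhds 0) (nhds ![a1, a5 * c, 0, a4 * c ^ 2]) := by
  have h1 : l1 = X ^ 3 * ((X + C δ) * f1) := by rw [hl1]; ring
  have h2 : l5 * d = X ^ 3 * ((X + C δ) * f5 * g) := by rw [hl5, hd]; ring
  have h3 : l4 ^ 2 * d = X ^ 3 * ((X + C δ) ^ 2 * f4 ^ 2 * g) := by rw [hl4, hd]; ring
  have h4 : l4 * d ^ 2 = X ^ 3 * ((X + C δ) * f4 * g ^ 2) := by rw [hl4, hd]; ring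
  refine ⟨fun n hn => ⟨by rw [h1]; exact aux_low _ hn, by rw [h2]; exact aux_low _ hn,
    by rw [h3]; exact aux_low _ hn, by rw [h4]; exact aux_low _ hn⟩,
    ?_, ?_, ?_, ?_, ?_, ?_⟩
  · rw [h1, aux_three]; simp [hf1]
  · rw [h2, aux_three]; simp [hf5, hg]; ring
  · rw [h3, aux_three]; simp [hf4, hg]; ring
  · rw [h4, aux_three]; simp [hf4, hg]; ring
  · intro e he
    funext i
    fin_cases i <;> simp <;> ring
  · rw [tendsto_pi_nhds]
    intro i
    fin_cases i
    · exact tendsto_const_nhds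
    · exact tendsto_const_nhds
    · simpa using ((continuous_mul_const (a4 ^ 2 * c)).tendsto (0:ℝ))
    · exact tendsto_const_nhds
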